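/- For Pair Matching, no deterministic online algorithm can achieve a competitive ratio less than 2. Formally: for every deterministic online algorithm A : List ℚ → ℚ → Bool and every N ∈ ℕ, there exists an input x₁,…,xₙ of pairwise distinct rationals in [0,1] with n ≥ N such that the number of indices i for which A [x₁,…,x_{i−1}] x_i equals the correct answer for x_i is at most n/2 (while the optimum, answering every item correctly, is n). -/

import Mathlib

def pmA (k : ℕ) : ℚ := 1 / (k + 3)

lemma pmA_pos (k : ℕ) : 0 < pmA k := by unfold pmA; positivity

lemma pmA_lt_half (k : ℕ) : pmA k < 1/2 := by
  unfold pmA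
  rw [div_lt_div_iff₀ (by positivity) (by norm_num)]
  have : (0:ℚ) ≤ (k:ℚ) := Nat.cast_nonneg k
  linarith

lemma pmA_inj : Function.Injective pmA := by
  intro j k h
  unfold pmA at h
  have hj : ((j:ℚ) + 3) ≠ 0 := by positivity
  have hk : ((k:ℚ) + 3) ≠ 0 := by positivity
  field_simp at h
  exact_mod_cast (by linarith : (j:ℚ) = k)

lemma pmA_lt_compl (j k : ℕ) : pmA j < 1 - pmA k := by
  have := pmA_lt_half j; have := pmA_lt_half k; linarith

def pmF (A : List ℚ → ℚ → Bool) : ℕ → List ℚ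
  | 0 => []
  | k+1 => pmF A k ++ (if A (pmF A k) (pmA k) then [pmA k] else [pmA k, 1 - pmA k])

variable (A : List ℚ → ℚ → Bool)

lemma pmF_prefix {k m : ℕ} (h : k ≤ m) : pmF A k <+: pmF A m := by
  induction m with
  | zero => simp [Nat.le_zero.mp h]
  | succ m ih =>
    rcases Nat.lt_or_ge k (m+1) with h' | h'
    · exact (ih (Nat.lt_succ_iff.mp h')).trans ⟨_, rfl⟩
    · have : k = m+1 := le_antisymm h h'
      subst this; exact List.prefix_refl _

lemma pmF_mem {x : ℚ} {N : ℕ} :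
    x ∈ pmF A N ↔ ∃ k < N, x = pmA k ∨ (x = 1 - pmA k ∧ A (pmF A k) (pmA k) = false) := by
  induction N with
  | zero => simp [pmF]
  | succ N ih =>
    rw [pmF, List.mem_append, ih]
    constructor
    · rintro (⟨k, hk, h⟩ | h)
      · exact ⟨k, Nat.lt_succ_of_lt hk, h⟩
      · refine ⟨N, Nat.lt_succ_self N, ?_⟩
        by_cases hA : A (pmF A N) (pmA N) = true
        · simp [hA] at h; exact Or.inl h
        · simp only [Bool.not_eq_true] at hA
          simp [hA] at h
          rcases h with h | h
          · exact Or.inl h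
          · exact Or.inr ⟨h, hA⟩
    · rintro ⟨k, hk, h⟩
      rcases Nat.lt_succ_iff_lt_or_eq.mp hk with hk' | rfl
      · exact Or.inl ⟨k, hk', h⟩
      · right
        rcases h with h | ⟨h, hA⟩
        · subst h; split <;> simp
        · subst h; simp [hA]

lemma pmF_nodup (N : ℕ) : (pmF A N).Nodup := by
  induction N with
  | zero => simp [pmF]
  | succ N ih =>
    rw [pmF]
    have hA : pmA N ∉ pmF A N := by
      rw [pmF_mem]
      rintro ⟨k, hk, h | ⟨h, _⟩⟩
      · exact absurd (pmA_inj h) (by omega)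
      · exact absurd h (ne_of_lt (pmA_lt_compl N k))
    have hB : (1 : ℚ) - pmA N ∉ pmF A N := by
      rw [pmF_mem]
      rintro ⟨k, hk, h | ⟨h, _⟩⟩
      · exact absurd h.symm (ne_of_lt (pmA_lt_compl k N))
      · have : pmA N = pmA k := by linarith
        exact absurd (pmA_inj this) (by omega)
    have hne : pmA N ≠ 1 - pmA N := ne_of_lt (pmA_lt_compl N N)
    apply List.Nodup.append ih
    · split <;> simp [hne]
    · intro x hx
      split <;> simp only [List.mem_singleton, List.mem_cons, List.not_mem_nil, or_false] <;>
        [skip; refine not_or.mpr ⟨?_, ?_⟩] <;> rintro rfl <;> first | exact hA hx | exact hB hx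

lemma pmF_length (N : ℕ) : N ≤ (pmF A N).length := by
  induction N with
  | zero => simp
  | succ N ih =>
    rw [pmF, List.length_append]
    have : 1 ≤ (if A (pmF A N) (pmA N) then [pmA N] else [pmA N, 1 - pmA N]).length := by
      split <;> simp
    omega

lemma pmF_split {k N : ℕ} (h : k < N) : ∃ t, pmF A N = pmF A k ++ pmA k :: t := by
  obtain ⟨s, hs⟩ := pmF_prefix A (show k+1 ≤ N from h)
  rw [pmF] at hs
  split at hs
  · exact ⟨s, by rw [← hs]; simp⟩
  · exact ⟨(1 - pmA k) :: s, by rw [← hs]; simp⟩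

def pmCorrect (l : List ℚ) (i : Fin l.length) : Bool :=
  decide (∃ j : Fin l.length, j ≠ i ∧ l.get i + l.get j = 1)

lemma pm_wrong (N : ℕ) (i : Fin (pmF A N).length) (hlt : (pmF A N).get i < 1/2) :
    ¬ (A ((pmF A N).take (i : ℕ)) ((pmF A N).get i) = pmCorrect (pmF A N) i) := by
  have hmem : (pmF A N).get i ∈ pmF A N := List.get_mem _ i
  rw [pmF_mem] at hmem
  obtain ⟨k, hk, hv | ⟨hv, _⟩⟩ := hmem
  swap
  · exact absurd hv (by have := pmA_lt_half k; intro h; rw [h] at hlt; linarith)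
  obtain ⟨t, ht⟩ := pmF_split A hk (N := N)
  have hlen : (pmF A k).length < (pmF A N).length := by rw [ht]; simp
  have hget : (pmF A N).get ⟨(pmF A k).length, hlen⟩ = pmA k := by
    rw [List.get_of_eq ht]
    simp [List.getElem_append_right (le_refl (pmF A k).length)]
  have hieq : i = ⟨(pmF A k).length, hlen⟩ := by
    apply List.nodup_iff_injective_get.mp (pmF_nodup A N)
    rw [hget, ← hv]
  have htake : (pmF A N).take (i : ℕ) = pmF A k := by
    rw [hieq]; simp only []; rw [ht]; exact List.take_left
  have hcor : pmCorrect (pmF A N) i = !(A (pmF A k) (pmA k)) := by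
    unfold pmCorrect
    cases hb : A (pmF A k) (pmA k) with
    | true =>
      simp only [Bool.not_true, decide_eq_false_iff_not]
      rintro ⟨j, hji, hsum⟩
      have hjm : (pmF A N).get j ∈ pmF A N := List.get_mem _ j
      rw [pmF_mem] at hjm
      obtain ⟨k', hk', hv' | ⟨hv', hA'⟩⟩ := hjm
      · have h1 : pmA k' = 1 - pmA k := by rw [hv] at hsum; rw [← hv']; linarith
        exact absurd h1 (ne_of_lt (pmA_lt_compl k' k))
      · have h1 : pmA k = pmA k' := by rw [hv] at hsum; rw [hv'] at hsum; linarith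
        rw [← pmA_inj h1, hb] at hA'
        simp at hA'
    | false =>
      simp only [Bool.not_false, decide_eq_true_iff]
      have hmem2 : (1 : ℚ) - pmA k ∈ pmF A N := by
        rw [pmF_mem]; exact ⟨k, hk, Or.inr ⟨rfl, hb⟩⟩
      obtain ⟨j, hj⟩ := List.mem_iff_get.mp hmem2
      refine ⟨j, ?_, by rw [hv, hj]; ring⟩
      intro hji
      rw [hji, hv] at hj
      exact absurd hj (ne_of_lt (pmA_lt_compl k k))
  rw [hcor, htake, hv]
  cases A (pmF A k) (pmA k) <;> simp

theorem pm_online_det_lower_bound (A : List ℚ → ℚ → Bool) (N : ℕ) :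
    ∃ l : List ℚ,
      l.Nodup ∧ (∀ x ∈ l, 0 ≤ x ∧ x ≤ 1) ∧ N ≤ l.length ∧
      2 * (Finset.univ.filter (fun i : Fin l.length =>
        A (l.take (i : ℕ)) (l.get i) = pmCorrect l i)).card ≤ l.length := by
  refine ⟨pmF A N, pmF_nodup A N, ?_, pmF_length A N, ?_⟩
  · intro x hx
    rw [pmF_mem] at hx
    obtain ⟨k, _, h | ⟨h, _⟩⟩ := hx <;> subst h <;>
      (have h1 := pmA_pos k; have h2 := pmA_lt_half k; constructor <;> linarith)
  · set p : Fin (pmF A N).length → Prop := fun i =>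
      A ((pmF A N).take (i : ℕ)) ((pmF A N).get i) = pmCorrect (pmF A N) i with hp
    have key : ∀ i : Fin (pmF A N).length, (pmF A N).get i < 1/2 → ¬ p i :=
      fun i h => pm_wrong A N i h
    have hsplit : (Finset.univ.filter p).card + (Finset.univ.filter (fun i => ¬ p i)).card
        = (pmF A N).length := by
      rw [Finset.card_filter_add_card_filter_not, Finset.card_univ, Fintype.card_fin]
    have hcompl : ∀ i : Fin (pmF A N).length, p i →
        (1 : ℚ) - (pmF A N).get i ∈ pmF A N ∧ 1 - (pmF A N).get i < 1/2 := by
      intro i hi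
      have hmem : (pmF A N).get i ∈ pmF A N := List.get_mem _ i
      rw [pmF_mem] at hmem
      obtain ⟨k, hk, hv | ⟨hv, _⟩⟩ := hmem
      · exact absurd hi (key i (hv ▸ pmA_lt_half k))
      · constructor
        · rw [hv, pmF_mem]
          exact ⟨k, hk, Or.inl (by ring)⟩
        · rw [hv]
          have := pmA_lt_half k
          linarith
    have hle : (Finset.univ.filter p).card ≤ (Finset.univ.filter (fun i => ¬ p i)).card := by
      refine Finset.card_le_card_of_injOn
        (fun i => if h : List.idxOf (1 - (pmF A N).get i) (pmF A N) < (pmF A N).length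
          then ⟨_, h⟩ else i) ?_ ?_
      · intro i hi
        have hi' := (Finset.mem_filter.mp hi).2
        obtain ⟨hmem, hsmall⟩ := hcompl i hi'
        have hidx : List.idxOf (1 - (pmF A N).get i) (pmF A N) < (pmF A N).length :=
          List.idxOf_lt_length_iff.mpr hmem
        simp only [dif_pos hidx]
        refine Finset.mem_filter.mpr ⟨Finset.mem_univ _, key _ ?_⟩
        rw [List.idxOf_get hidx]
        exact hsmall
      · intro i₁ hi₁ i₂ hi₂ heq
        simp only [Finset.coe_filter, Set.mem_setOf_eq] at hi₁ hi₂
        have h1 := List.idxOf_lt_length_iff.mpr (hcompl i₁ hi₁.2).1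
        have h2 := List.idxOf_lt_length_iff.mpr (hcompl i₂ hi₂.2).1
        simp only [dif_pos h1, dif_pos h2] at heq
        have hgg : (pmF A N).get ⟨_, h1⟩ = (pmF A N).get ⟨_, h2⟩ := by rw [heq]
        rw [List.idxOf_get h1, List.idxOf_get h2] at hgg
        have hg : (pmF A N).get i₁ = (pmF A N).get i₂ := by linarith
        exact List.nodup_iff_injective_get.mp (pmF_nodup A N) hg
    show 2 * (Finset.univ.filter p).card ≤ (pmF A N).length
    omega
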